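/- arXiv:2006.04293 — 4 statements merged into one kernel-verified Lean document; each statement's English description precedes it below -/
import Mathlib

section
/- Fix an integer K ≥ 1, reals ρ₁ > 1, D > 0, κ₁ > 0, and a function c₀ : (0, ρ₁) → (0, 1]. Let φ₁, φ₂ : (−ρ₁, ρ₁) → ℝ be continuous with sup_{(−ρ₁,ρ₁)} |φ_i| ≤ D for i = 1, 2, and assume: (i) for each i ∈ {1,2}, every c ∈ ℝ, every real polynomial P of degree ≤ K, every ρ ∈ (0, ρ₁) and every s₀ with (s₀ − ρ, s₀ + ρ) ⊆ (−ρ₁, ρ₁), one has sup_{|s−s₀|<ρ} |c φ_i(s) + P(s)| ≥ c₀(ρ) · sup_{|s|<ρ₁} |c φ_i(s) + P(s)|; (ii) for each i ∈ {1,2} and every real polynomial P of degree ≤ K, sup_{s∈J} |φ_i(s) + P(s)| > κ₁ both for J = [0,1) and for J = (−1,0]. Then for every ρ ∈ (0, ρ₁) there exists κ > 0 such that for every (z₀, y₀) ∈ (−ρ₁+ρ, ρ₁−ρ)², all h₁, h₂ ∈ ℝ, and every real polynomial P(z,y) of degree at most K in z and at most K in y satisfying P(z,0) = 0 and P(0,y)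 = 0 for all z, y, the function R(z,y) = h₁ y φ₁(z) + h₂ z φ₂(y) + P(z,y) satisfies Osc_{B(z₀,ρ)×B(y₀,ρ)} R ≥ κ · sup_{(z,y)∈(−ρ₁,ρ₁)²} |R(z,y)|. -/
open Set Polynomial

noncomputable def sliceX (P : MvPolynomial (Fin 2) ℝ) (t : ℝ) : Polynomial ℝ :=
  Polynomial.map (MvPolynomial.eval fun _ => t) (MvPolynomial.finSuccEquiv ℝ 1 P)

lemma sliceX_eval (P : MvPolynomial (Fin 2) ℝ) (t s : ℝ) :
    (sliceX P t).eval s = MvPolynomial.eval ![s, t] P := by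
  have h : (![s, t] : Fin 2 → ℝ) = Fin.cons s (fun _ => t) := by
    funext i; fin_cases i <;> rfl
  rw [h, MvPolynomial.eval_eq_eval_mv_eval']
  rfl

lemma sliceX_natDegree (P : MvPolynomial (Fin 2) ℝ) (t : ℝ) :
    (sliceX P t).natDegree ≤ MvPolynomial.degreeOf 0 P :=
  (Polynomial.natDegree_map_le).trans
    (le_of_eq (MvPolynomial.natDegree_finSuccEquiv P))

noncomputable def sliceY (P : MvPolynomial (Fin 2) ℝ) (t : ℝ) : Polynomial ℝ :=
  sliceX (MvPolynomial.rename (Equiv.swap (0 : Fin 2) 1) P) t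

lemma sliceY_eval (P : MvPolynomial (Fin 2) ℝ) (t s : ℝ) :
    (sliceY P t).eval s = MvPolynomial.eval ![t, s] P := by
  rw [sliceY, sliceX_eval, MvPolynomial.eval_rename]
  have h : (![s, t] ∘ ⇑(Equiv.swap (0 : Fin 2) 1)) = ![t, s] := by
    funext i; fin_cases i <;> simp
  rw [h]

lemma sliceY_natDegree (P : MvPolynomial (Fin 2) ℝ) (t : ℝ) :
    (sliceY P t).natDegree ≤ MvPolynomial.degreeOf 1 P := by
  refine (sliceX_natDegree _ t).trans (le_of_eq ?_)
  have := MvPolynomial.degreeOf_rename_of_injective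
    (p := P) (f := Equiv.swap (0 : Fin 2) 1) (Equiv.swap _ _).injective 1
  simpa using this

lemma contP (P : MvPolynomial (Fin 2) ℝ) :
    Continuous fun p : ℝ × ℝ => MvPolynomial.eval ![p.1, p.2] P := by
  induction P using MvPolynomial.induction_on with
  | C a => simpa using continuous_const
  | add p q hp hq => simpa only [map_add, Pi.add_def] using hp.add hq
  | mul_X p i hp =>
      simp only [map_mul, MvPolynomial.eval_X]
      refine hp.mul ?_
      fin_cases i
      · simpa using continuous_fst
      · simpa using continuous_snd

set_option maxHeartbeats 1000000 in
/-- (Lower bound on the oscillation of template-type functions.)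
Fix `K ≥ 1`, `ρ₁ > 1`, `D > 0`, `κ₁ > 0` and `c₀ : (0,ρ₁) → (0,1]`.  Let `φ₁, φ₂` be continuous
functions on `(-ρ₁, ρ₁)` bounded by `D` satisfying (i) the localized lower bound with constant
`c₀ ρ` on every subinterval `B(s₀,ρ) ⊆ (-ρ₁,ρ₁)` for every function `c φᵢ + P` with `P` a
polynomial of degree `≤ K`, and (ii) the non-degeneracy `sup_J |φᵢ + P| > κ₁` on `J = [0,1)` and
`J = (-1,0]` for every such `P`.  Then for every `ρ ∈ (0,ρ₁)` there exists `κ > 0` such that for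
every `(z₀,y₀) ∈ (-ρ₁+ρ, ρ₁-ρ)²`, all `h₁ h₂ ∈ ℝ`, and every real polynomial `P(z,y)` of degree
`≤ K` in each variable with `P(z,0) = P(0,y) = 0`, the function
`R(z,y) = h₁ y φ₁(z) + h₂ z φ₂(y) + P(z,y)` satisfies
`Osc_{B(z₀,ρ)×B(y₀,ρ)} R ≥ κ sup_{(-ρ₁,ρ₁)²} |R|`. -/
theorem oscillation_lower_bound
    (K : ℕ) (hK : 1 ≤ K) (ρ₁ D κ₁ : ℝ) (hρ₁ : 1 < ρ₁) (hD : 0 < D) (hκ₁ : 0 < κ₁)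
    (c₀ : ℝ → ℝ) (hc₀ : ∀ ρ ∈ Ioo (0 : ℝ) ρ₁, c₀ ρ ∈ Ioc (0 : ℝ) 1)
    (φ : Fin 2 → ℝ → ℝ)
    (hcont : ∀ i, ContinuousOn (φ i) (Ioo (-ρ₁) ρ₁))
    (hbound : ∀ i, ∀ s ∈ Ioo (-ρ₁) ρ₁, |φ i s| ≤ D)
    (hlocal : ∀ i, ∀ c : ℝ, ∀ P : Polynomial ℝ, P.natDegree ≤ K →
      ∀ ρ ∈ Ioo (0 : ℝ) ρ₁, ∀ s₀ : ℝ, Ioo (s₀ - ρ) (s₀ + ρ) ⊆ Ioo (-ρ₁) ρ₁ →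
        c₀ ρ * sSup ((fun s => |c * φ i s + P.eval s|) '' Ioo (-ρ₁) ρ₁)
          ≤ sSup ((fun s => |c * φ i s + P.eval s|) '' Ioo (s₀ - ρ) (s₀ + ρ)))
    (huni : ∀ i, ∀ P : Polynomial ℝ, P.natDegree ≤ K →
      κ₁ < sSup ((fun s => |φ i s + P.eval s|) '' Ico (0 : ℝ) 1) ∧
      κ₁ < sSup ((fun s => |φ i s + P.eval s|) '' Ioc (-1 : ℝ) 0)) :
    ∀ ρ ∈ Ioo (0 : ℝ) ρ₁, ∃ κ : ℝ, 0 < κ ∧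
      ∀ z₀ ∈ Ioo (-ρ₁ + ρ) (ρ₁ - ρ), ∀ y₀ ∈ Ioo (-ρ₁ + ρ) (ρ₁ - ρ),
      ∀ h₁ h₂ : ℝ, ∀ P : MvPolynomial (Fin 2) ℝ,
        MvPolynomial.degreeOf 0 P ≤ K → MvPolynomial.degreeOf 1 P ≤ K →
        (∀ z : ℝ, MvPolynomial.eval ![z, 0] P = 0) →
        (∀ y : ℝ, MvPolynomial.eval ![0, y] P = 0) →
        (let R : ℝ × ℝ → ℝ := fun p =>
            h₁ * p.2 * φ 0 p.1 + h₂ * p.1 * φ 1 p.2 + MvPolynomial.eval ![p.1, p.2] P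
         let Q : Set (ℝ × ℝ) := Ioo (z₀ - ρ) (z₀ + ρ) ×ˢ Ioo (y₀ - ρ) (y₀ + ρ)
         κ * sSup ((fun p => |R p|) '' (Ioo (-ρ₁) ρ₁ ×ˢ Ioo (-ρ₁) ρ₁))
           ≤ sSup (R '' Q) - sInf (R '' Q)) := by
  intro ρ hρ
  obtain ⟨hρpos, hρlt⟩ := hρ
  obtain ⟨hcpos, hcle⟩ := hc₀ ρ ⟨hρpos, hρlt⟩
  set c : ℝ := c₀ ρ with hcdef
  have hρ₁pos : (0:ℝ) < ρ₁ := by linarith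
  set C : ℝ := 12 / c^2 + (ρ₁/ρ) * (1 + 12 / c^2) with hCdef
  have hCpos : 0 < C := by positivity
  refine ⟨1 / C, by positivity, ?_⟩
  intro z₀ hz₀ y₀ hy₀ h₁ h₂ P hd0 hd1 hPz0 hP0y
  intro R Q
  have hR : ∀ z y : ℝ, R (z, y)
      = h₁ * y * φ 0 z + h₂ * z * φ 1 y + MvPolynomial.eval ![z, y] P := fun _ _ => rfl
  -- window inclusions and memberships
  have hBz : Ioo (z₀ - ρ) (z₀ + ρ) ⊆ Ioo (-ρ₁) ρ₁ := fun s hs =>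
    ⟨by linarith [hs.1, hz₀.1], by linarith [hs.2, hz₀.2]⟩
  have hBy : Ioo (y₀ - ρ) (y₀ + ρ) ⊆ Ioo (-ρ₁) ρ₁ := fun s hs =>
    ⟨by linarith [hs.1, hy₀.1], by linarith [hs.2, hy₀.2]⟩
  have hz₀m : z₀ ∈ Ioo (z₀ - ρ) (z₀ + ρ) := ⟨by linarith, by linarith⟩
  have hy₀m : y₀ ∈ Ioo (y₀ - ρ) (y₀ + ρ) := ⟨by linarith, by linarith⟩
  have hz₀f : z₀ ∈ Ioo (-ρ₁) ρ₁ := hBz hz₀m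
  have hy₀f : y₀ ∈ Ioo (-ρ₁) ρ₁ := hBy hy₀m
  have h0f : (0:ℝ) ∈ Ioo (-ρ₁) ρ₁ := ⟨by linarith, by linarith⟩
  have hQsub : Q ⊆ Ioo (-ρ₁) ρ₁ ×ˢ Ioo (-ρ₁) ρ₁ := fun p hp => ⟨hBz hp.1, hBy hp.2⟩
  -- boundedness of R on the big square
  obtain ⟨CP, hCP⟩ : ∃ CP, ∀ p ∈ Icc (-ρ₁) ρ₁ ×ˢ Icc (-ρ₁) ρ₁,
      ‖MvPolynomial.eval ![p.1, p.2] P‖ ≤ CP :=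
    (isCompact_Icc.prod isCompact_Icc).exists_bound_of_continuousOn (contP P).continuousOn
  have hRb : ∀ p ∈ Ioo (-ρ₁) ρ₁ ×ˢ Ioo (-ρ₁) ρ₁,
      |R p| ≤ |h₁| * ρ₁ * D + |h₂| * ρ₁ * D + CP := by
    intro p hp
    obtain ⟨hp1, hp2⟩ := hp
    have e1 : |h₁ * p.2 * φ 0 p.1| ≤ |h₁| * ρ₁ * D := by
      rw [abs_mul, abs_mul]
      have hb := hbound 0 p.1 hp1
      have h2' : |p.2| ≤ ρ₁ := le_of_lt (abs_lt.2 ⟨hp2.1, hp2.2⟩)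
      gcongr
    have e2 : |h₂ * p.1 * φ 1 p.2| ≤ |h₂| * ρ₁ * D := by
      rw [abs_mul, abs_mul]
      have h1' : |p.1| ≤ ρ₁ := le_of_lt (abs_lt.2 ⟨hp1.1, hp1.2⟩)
      have hb := hbound 1 p.2 hp2
      gcongr
    have e3 : |MvPolynomial.eval ![p.1, p.2] P| ≤ CP := by
      have := hCP p ⟨⟨hp1.1.le, hp1.2.le⟩, ⟨hp2.1.le, hp2.2.le⟩⟩
      simpa [Real.norm_eq_abs] using this
    calc |R p| ≤ |h₁ * p.2 * φ 0 p.1| + |h₂ * p.1 * φ 1 p.2|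
          + |MvPolynomial.eval ![p.1, p.2] P| := abs_add_three _ _ _
      _ ≤ _ := by linarith
  -- basic facts about Q and the oscillation
  have hQmem : (z₀, y₀) ∈ Q := ⟨hz₀m, hy₀m⟩
  have hbddA : BddAbove (R '' Q) := ⟨|h₁| * ρ₁ * D + |h₂| * ρ₁ * D + CP, by
    rintro _ ⟨p, hp, rfl⟩; exact (le_abs_self _).trans (hRb p (hQsub hp))⟩
  have hbddB : BddBelow (R '' Q) := ⟨-(|h₁| * ρ₁ * D + |h₂| * ρ₁ * D + CP), by
    rintro _ ⟨p, hp, rfl⟩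
    exact le_trans (neg_le_neg (hRb p (hQsub hp))) (neg_abs_le _)⟩
  obtain ⟨ω, hωdef⟩ : ∃ ω : ℝ, ω = sSup (R '' Q) - sInf (R '' Q) := ⟨_, rfl⟩
  rw [← hωdef]
  have hpair : ∀ p ∈ Q, ∀ q ∈ Q, R p - R q ≤ ω := by
    intro p hp q hq
    rw [hωdef]
    exact sub_le_sub (le_csSup hbddA ⟨p, hp, rfl⟩) (csInf_le hbddB ⟨q, hq, rfl⟩)
  have hωnn : 0 ≤ ω := by have := hpair _ hQmem _ hQmem; linarith
  obtain ⟨e, hedef⟩ : ∃ e : ℝ, e = ω / c ^ 2 := ⟨_, rfl⟩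
  have henn : 0 ≤ e := by rw [hedef]; positivity
  -- master transfer lemma from hlocal
  have master : ∀ (i : Fin 2) (c' : ℝ) (Qp : Polynomial ℝ), Qp.natDegree ≤ K →
      ∀ s₀ : ℝ, Ioo (s₀ - ρ) (s₀ + ρ) ⊆ Ioo (-ρ₁) ρ₁ → ∀ m : ℝ,
      (∀ s ∈ Ioo (s₀ - ρ) (s₀ + ρ), |c' * φ i s + Qp.eval s| ≤ m) →
      ∀ s ∈ Ioo (-ρ₁) ρ₁, c * |c' * φ i s + Qp.eval s| ≤ m := by
    intro i c' Qp hQp s₀ hsub m hm s hs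
    obtain ⟨CQ, hCQ⟩ : ∃ CQ, ∀ x ∈ Icc (-ρ₁) ρ₁, ‖Qp.eval x‖ ≤ CQ :=
      isCompact_Icc.exists_bound_of_continuousOn (Qp.continuous).continuousOn
    have hbdd : BddAbove ((fun s => |c' * φ i s + Qp.eval s|) '' Ioo (-ρ₁) ρ₁) := by
      refine ⟨|c'| * D + CQ, ?_⟩
      rintro _ ⟨x, hx, rfl⟩
      have h1 := hbound i x hx
      have h2 := hCQ x ⟨hx.1.le, hx.2.le⟩
      rw [Real.norm_eq_abs] at h2
      calc |c' * φ i x + Qp.eval x| ≤ |c' * φ i x| + |Qp.eval x| := abs_add_le _ _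
        _ ≤ |c'| * D + CQ := by
            rw [abs_mul]
            exact add_le_add (mul_le_mul_of_nonneg_left h1 (abs_nonneg _)) h2
    have hsupw : sSup ((fun s => |c' * φ i s + Qp.eval s|) '' Ioo (s₀ - ρ) (s₀ + ρ)) ≤ m :=
      csSup_le ⟨_, ⟨s₀, ⟨by linarith, by linarith⟩, rfl⟩⟩
        (by rintro _ ⟨x, hx, rfl⟩; exact hm x hx)
    have hloc := hlocal i c' Qp hQp ρ ⟨hρpos, hρlt⟩ s₀ hsub
    have hmem : |c' * φ i s + Qp.eval s|
        ≤ sSup ((fun s => |c' * φ i s + Qp.eval s|) '' Ioo (-ρ₁) ρ₁) :=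
      le_csSup hbdd ⟨s, hs, rfl⟩
    calc c * |c' * φ i s + Qp.eval s|
        ≤ c * sSup ((fun s => |c' * φ i s + Qp.eval s|) '' Ioo (-ρ₁) ρ₁) :=
          mul_le_mul_of_nonneg_left hmem hcpos.le
      _ ≤ _ := hloc
      _ ≤ m := hsupw
  -- Step A : difference in the z-direction
  have stepA : ∀ z ∈ Ioo (z₀ - ρ) (z₀ + ρ), ∀ y ∈ Ioo (-ρ₁) ρ₁,
      c * |R (z, y) - R (z₀, y) - R (z, y₀) + R (z₀, y₀)| ≤ 2 * ω := by
    intro z hz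
    set Qp : Polynomial ℝ := Polynomial.C (h₁ * (φ 0 z - φ 0 z₀)) * Polynomial.X
        + (sliceY P z - sliceY P z₀) - Polynomial.C (R (z, y₀) - R (z₀, y₀)) with hQpdef
    have hdeg : Qp.natDegree ≤ K := by
      refine (natDegree_sub_le _ _).trans
        (max_le ((natDegree_add_le _ _).trans (max_le ?_ ?_)) ?_)
      · exact (natDegree_C_mul_le _ _).trans (natDegree_X_le.trans hK)
      · exact (natDegree_sub_le _ _).trans
          (max_le ((sliceY_natDegree P z).trans hd1) ((sliceY_natDegree P z₀).trans hd1))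
      · simpa using Nat.zero_le K
    have hid : ∀ y : ℝ, h₂ * (z - z₀) * φ 1 y + Qp.eval y
        = R (z, y) - R (z₀, y) - R (z, y₀) + R (z₀, y₀) := by
      intro y
      simp only [hQpdef, eval_sub, eval_add, eval_mul, eval_C, eval_X, sliceY_eval, hR]
      ring
    intro y hy
    have hm : ∀ s ∈ Ioo (y₀ - ρ) (y₀ + ρ),
        |h₂ * (z - z₀) * φ 1 s + Qp.eval s| ≤ 2 * ω := by
      intro s hs
      rw [hid s]
      have p1 := hpair (z, s) ⟨hz, hs⟩ (z₀, s) ⟨hz₀m, hs⟩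
      have p2 := hpair (z₀, s) ⟨hz₀m, hs⟩ (z, s) ⟨hz, hs⟩
      have p3 := hpair (z, y₀) ⟨hz, hy₀m⟩ (z₀, y₀) hQmem
      have p4 := hpair (z₀, y₀) hQmem (z, y₀) ⟨hz, hy₀m⟩
      rw [abs_le]; constructor <;> linarith
    have hkey := master 1 (h₂ * (z - z₀)) Qp hdeg y₀ hBy (2 * ω) hm y hy
    rwa [hid y] at hkey
  -- Step B : double difference bound on the whole square
  have stepB : ∀ z ∈ Ioo (-ρ₁) ρ₁, ∀ y ∈ Ioo (-ρ₁) ρ₁,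
      |R (z, y) - R (z₀, y) - R (z, y₀) + R (z₀, y₀)| ≤ 2 * e := by
    intro z hz y hy
    set Qp : Polynomial ℝ := Polynomial.C (h₂ * (φ 1 y - φ 1 y₀)) * Polynomial.X
        + (sliceX P y - sliceX P y₀) - Polynomial.C (R (z₀, y) - R (z₀, y₀)) with hQpdef
    have hdeg : Qp.natDegree ≤ K := by
      refine (natDegree_sub_le _ _).trans
        (max_le ((natDegree_add_le _ _).trans (max_le ?_ ?_)) ?_)
      · exact (natDegree_C_mul_le _ _).trans (natDegree_X_le.trans hK)
      · exact (natDegree_sub_le _ _).trans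
          (max_le ((sliceX_natDegree P y).trans hd0) ((sliceX_natDegree P y₀).trans hd0))
      · simpa using Nat.zero_le K
    have hid : ∀ s : ℝ, h₁ * (y - y₀) * φ 0 s + Qp.eval s
        = R (s, y) - R (z₀, y) - R (s, y₀) + R (z₀, y₀) := by
      intro s
      simp only [hQpdef, eval_sub, eval_add, eval_mul, eval_C, eval_X, sliceX_eval, hR]
      ring
    have hm : ∀ s ∈ Ioo (z₀ - ρ) (z₀ + ρ),
        |h₁ * (y - y₀) * φ 0 s + Qp.eval s| ≤ 2 * ω / c := by
      intro s hs
      rw [hid s, le_div_iff₀ hcpos]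
      have := stepA s hs y hy
      linarith
    have hkey := master 0 (h₁ * (y - y₀)) Qp hdeg z₀ hBz (2 * ω / c) hm z hz
    rw [hid z] at hkey
    rw [le_div_iff₀ hcpos] at hkey
    rw [hedef, show (2:ℝ) * (ω / c ^ 2) = 2 * ω / c ^ 2 from by ring,
      le_div_iff₀ (pow_pos hcpos 2)]
    nlinarith [hkey, abs_nonneg (R (z, y) - R (z₀, y) - R (z, y₀) + R (z₀, y₀))]
  -- R is linear on the axes
  obtain ⟨b, hbdef⟩ : ∃ b : ℝ, b = h₂ * φ 1 0 := ⟨_, rfl⟩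
  obtain ⟨d, hddef⟩ : ∃ d : ℝ, d = h₁ * φ 0 0 := ⟨_, rfl⟩
  obtain ⟨r₀, hr₀def⟩ : ∃ r₀ : ℝ, r₀ = R (z₀, y₀) := ⟨_, rfl⟩
  have hRz0 : ∀ z : ℝ, R (z, 0) = b * z := by
    intro z; rw [hR, hPz0, hbdef]; ring
  have hR0y : ∀ y : ℝ, R (0, y) = d * y := by
    intro y; rw [hR, hP0y, hddef]; ring
  -- R is close to an affine function on the whole square
  have hRL : ∀ z ∈ Ioo (-ρ₁) ρ₁, ∀ y ∈ Ioo (-ρ₁) ρ₁,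
      |R (z, y) - (r₀ + b * (z - z₀) + d * (y - y₀))| ≤ 6 * e := by
    intro z hz y hy
    have d1 := stepB z hz y hy
    have d2 := stepB z hz 0 h0f
    have d3 := stepB 0 h0f y hy
    rw [hRz0 z, hRz0 z₀, ← hr₀def] at d2
    rw [hR0y y, hR0y y₀, ← hr₀def] at d3
    rw [← hr₀def] at d1
    rw [abs_le] at d1 d2 d3 ⊢
    constructor <;> linarith [d1.1, d1.2, d2.1, d2.2, d3.1, d3.2]
  -- value of the affine function at the origin
  have hL00 : |r₀ - b * z₀ - d * y₀| ≤ 6 * e := by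
    have h := hRL 0 h0f 0 h0f
    rw [hRz0 0, mul_zero] at h
    rw [abs_le] at h ⊢
    constructor <;> [linarith [h.1, h.2]; linarith [h.1, h.2]]
  -- slope bound from the oscillation
  have hslope : ρ * (|b| + |d|) ≤ ω + 12 * e := by
    have key : ∀ t u : ℝ, |t| ≤ ρ / 2 → |u| ≤ ρ / 2 →
        2 * (b * t + d * u) ≤ ω + 12 * e := by
      intro t u ht hu
      rw [abs_le] at ht hu
      have hpQ : (z₀ + t, y₀ + u) ∈ Q :=
        ⟨⟨by simp only; linarith, by simp only; linarith⟩,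
         ⟨by simp only; linarith, by simp only; linarith⟩⟩
      have hqQ : (z₀ - t, y₀ - u) ∈ Q :=
        ⟨⟨by simp only; linarith, by simp only; linarith⟩,
         ⟨by simp only; linarith, by simp only; linarith⟩⟩
      have h1 := hpair _ hpQ _ hqQ
      have h2 := hRL (z₀ + t) (hBz hpQ.1) (y₀ + u) (hBy hpQ.2)
      have h3 := hRL (z₀ - t) (hBz hqQ.1) (y₀ - u) (hBy hqQ.2)
      rw [abs_le] at h2 h3
      linarith [h1, h2.1, h3.2]
    have h2a : |(ρ / 2 : ℝ)| ≤ ρ / 2 := by rw [abs_of_nonneg (by linarith)]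
    have h2b : |(-(ρ / 2) : ℝ)| ≤ ρ / 2 := by rw [abs_neg, abs_of_nonneg (by linarith)]
    rcases le_total 0 b with hb' | hb' <;> rcases le_total 0 d with hd' | hd'
    · have := key (ρ / 2) (ρ / 2) h2a h2a
      rw [abs_of_nonneg hb', abs_of_nonneg hd']; linarith
    · have := key (ρ / 2) (-(ρ / 2)) h2a h2b
      rw [abs_of_nonneg hb', abs_of_nonpos hd']; linarith
    · have := key (-(ρ / 2)) (ρ / 2) h2b h2a
      rw [abs_of_nonpos hb', abs_of_nonneg hd']; linarith
    · have := key (-(ρ / 2)) (-(ρ / 2)) h2b h2b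
      rw [abs_of_nonpos hb', abs_of_nonpos hd']; linarith
  have hslope' : ρ₁ * (|b| + |d|) ≤ ρ₁ / ρ * (ω + 12 * e) := by
    rw [div_mul_eq_mul_div, le_div_iff₀ hρpos]
    nlinarith [mul_le_mul_of_nonneg_left hslope hρ₁pos.le]
  -- conclusion
  calc 1 / C * sSup ((fun p => |R p|) '' (Ioo (-ρ₁) ρ₁ ×ˢ Ioo (-ρ₁) ρ₁))
      ≤ 1 / C * (C * ω) := by
        refine mul_le_mul_of_nonneg_left
          (csSup_le ⟨|R (0, 0)|, ⟨(0, 0), ⟨h0f, h0f⟩, rfl⟩⟩ ?_) (by positivity)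
        rintro _ ⟨⟨z, y⟩, ⟨hp1, hp2⟩, rfl⟩
        simp only
        have h2 := hRL z hp1 y hp2
        have e1 : |z| ≤ ρ₁ := (abs_lt.2 ⟨hp1.1, hp1.2⟩).le
        have e2 : |y| ≤ ρ₁ := (abs_lt.2 ⟨hp2.1, hp2.2⟩).le
        have t1 : |R (z, y)| ≤ |R (z, y) - (r₀ + b * (z - z₀) + d * (y - y₀))|
            + |r₀ + b * (z - z₀) + d * (y - y₀)| := by
          have h := abs_add_le (R (z, y) - (r₀ + b * (z - z₀) + d * (y - y₀)))
            (r₀ + b * (z - z₀) + d * (y - y₀))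
          simpa using h
        have t2 : |r₀ + b * (z - z₀) + d * (y - y₀)|
            ≤ |r₀ - b * z₀ - d * y₀| + |b| * |z| + |d| * |y| := by
          calc |r₀ + b * (z - z₀) + d * (y - y₀)|
              = |(r₀ - b * z₀ - d * y₀) + b * z + d * y| := by
                rw [show r₀ + b * (z - z₀) + d * (y - y₀)
                  = (r₀ - b * z₀ - d * y₀) + b * z + d * y from by ring]
            _ ≤ |(r₀ - b * z₀ - d * y₀) + b * z| + |d * y| := abs_add_le _ _
            _ ≤ |r₀ - b * z₀ - d * y₀| + |b * z| + |d * y| := by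
                linarith [abs_add_le (r₀ - b * z₀ - d * y₀) (b * z)]
            _ = |r₀ - b * z₀ - d * y₀| + |b| * |z| + |d| * |y| := by
                rw [abs_mul, abs_mul]
        have m1 : |b| * |z| ≤ |b| * ρ₁ := mul_le_mul_of_nonneg_left e1 (abs_nonneg b)
        have m2 : |d| * |y| ≤ |d| * ρ₁ := mul_le_mul_of_nonneg_left e2 (abs_nonneg d)
        have hfin : |R (z, y)| ≤ 12 * e + ρ₁ * (|b| + |d|) := by nlinarith
        calc |R (z, y)| ≤ 12 * e + ρ₁ * (|b| + |d|) := hfin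
          _ ≤ 12 * e + ρ₁ / ρ * (ω + 12 * e) := by linarith
          _ = C * ω := by
                rw [hCdef, hedef]
                field_simp
    _ = ω := by field_simp
end

section
/- Fix θ ∈ (0,1], an integer K ≥ 1, and reals ρ₁ ≥ 1, D > 0, κ₁ > 0. Let ψ : (−ρ₁, ρ₁) → ℝ satisfy ψ(0) = 0, sup_{(−ρ₁,ρ₁)} |ψ| ≤ D, |ψ(s) − ψ(t)| ≤ D |s−t|^θ for all s, t ∈ (−ρ₁, ρ₁), and suppose that for every real polynomial P of degree ≤ K one has sup_{s∈J} |ψ(s) + P(s)| > κ₁ both for J = [0,1) and for J = (−1,0]. Then there exists C > 0, depending only on θ, K, D, κ₁, such that for every ρ ∈ (0,1], every c ∈ ℝ, and every real polynomial P of degree ≤ K with P(0) = 0: sup_{|s|<ρ} |c ψ(s) + P(s)| ≤ C ρ^θ · sup_{|s|<ρ₁} |c ψ(s) + P(s)|. -/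
open Set

lemma coeff_bound_aux (K : ℕ) (hK : 1 ≤ K) :
    ∃ c : ℝ, 0 < c ∧ ∀ P : Polynomial ℝ, P.natDegree ≤ K → ∀ B : ℝ,
      (∀ s ∈ Icc (0:ℝ) (1/2), |P.eval s| ≤ B) → ∀ i : ℕ, |P.coeff i| ≤ c * B := by
  classical
  set v : Fin (K + 1) → ℝ := fun j => (j : ℝ) / (2 * K) with hv
  have hKpos : (0:ℝ) < K := by exact_mod_cast hK
  have hvinj : Set.InjOn v (Finset.univ : Finset (Fin (K+1))) := by
    intro a _ b _ hab
    have h2 : (2 * (K:ℝ)) ≠ 0 := by positivity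
    have : (a : ℝ) = (b : ℝ) := by
      simp only [hv] at hab
      rw [div_eq_div_iff h2 h2] at hab
      exact mul_right_cancel₀ h2 hab
    exact Fin.ext (by exact_mod_cast this)
  set Φ : (Fin (K+1) → ℝ) →ₗ[ℝ] (Fin (K+1) → ℝ) :=
    LinearMap.pi (fun i => (Polynomial.lcoeff ℝ (i : ℕ)).comp
      (Lagrange.interpolate Finset.univ v)) with hΦ
  set Φc := LinearMap.toContinuousLinearMap Φ with hΦc
  refine ⟨‖Φc‖ + 1, by positivity, ?_⟩
  intro P hP B hB i
  have hB0 : 0 ≤ B := le_trans (abs_nonneg _) (hB 0 ⟨le_refl _, by norm_num⟩)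
  by_cases hi : i ≤ K
  · set r : Fin (K+1) → ℝ := fun j => P.eval (v j) with hr
    have hdeg : P.degree < (Finset.univ : Finset (Fin (K+1))).card := by
      simp only [Finset.card_univ, Fintype.card_fin]
      exact lt_of_le_of_lt Polynomial.degree_le_natDegree
        (by exact_mod_cast Nat.lt_succ_of_le hP)
    have hPeq : P = Lagrange.interpolate Finset.univ v r :=
      Lagrange.eq_interpolate hvinj hdeg
    have hrB : ‖r‖ ≤ B := by
      rw [pi_norm_le_iff_of_nonneg hB0]
      intro j
      rw [Real.norm_eq_abs]
      refine hB (v j) ⟨by positivity, ?_⟩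
      have hj : (j : ℝ) ≤ (K : ℝ) := by exact_mod_cast Nat.lt_succ_iff.mp j.isLt
      rw [div_le_iff₀ (by positivity)]
      linarith
    have key : |P.coeff i| = ‖Φ r ⟨i, Nat.lt_succ_of_le hi⟩‖ := by
      rw [Real.norm_eq_abs]
      congr 1
      simp only [hΦ, LinearMap.pi_apply, LinearMap.comp_apply, Polynomial.lcoeff_apply]
      conv_lhs => rw [hPeq]
    rw [key]
    calc ‖Φ r ⟨i, Nat.lt_succ_of_le hi⟩‖ ≤ ‖Φ r‖ := norm_le_pi_norm _ _
      _ = ‖Φc r‖ := rfl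
      _ ≤ ‖Φc‖ * ‖r‖ := Φc.le_opNorm r
      _ ≤ ‖Φc‖ * B := mul_le_mul_of_nonneg_left hrB (norm_nonneg _)
      _ ≤ (‖Φc‖ + 1) * B := by nlinarith
  · rw [Polynomial.coeff_eq_zero_of_natDegree_lt (lt_of_le_of_lt hP (not_le.mp hi))]
    simp; positivity

/-- Fix `θ ∈ (0,1]`, an integer `K ≥ 1`, and reals `D > 0`, `κ₁ > 0`.
There exists a constant `C > 0` (depending only on `θ, K, D, κ₁`) such that the following
holds.  Let `ρ₁ ≥ 1` and let `ψ : (-ρ₁, ρ₁) → ℝ` satisfy `ψ 0 = 0`, `|ψ| ≤ D`, be `θ`-Hölder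
with constant `D`, and satisfy `sup_{s ∈ J} |ψ s + P s| > κ₁` for every real polynomial `P` of
degree at most `K`, both for `J = [0,1)` and `J = (-1,0]`.  Then for every `ρ ∈ (0,1]`, every
`c ∈ ℝ`, and every real polynomial `P` of degree `≤ K` with `P 0 = 0`,
`sup_{|s| < ρ} |c ψ s + P s| ≤ C ρ^θ sup_{|s| < ρ₁} |c ψ s + P s|`. -/
theorem holder_template_small_scale_bound
    (θ : ℝ) (hθ0 : 0 < θ) (hθ1 : θ ≤ 1) (K : ℕ) (hK : 1 ≤ K)
    (D κ₁ : ℝ) (hD : 0 < D) (hκ₁ : 0 < κ₁) :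
    ∃ C : ℝ, 0 < C ∧
      ∀ ρ₁ : ℝ, 1 ≤ ρ₁ →
      ∀ ψ : ℝ → ℝ, ψ 0 = 0 →
        (∀ s ∈ Ioo (-ρ₁) ρ₁, |ψ s| ≤ D) →
        (∀ s ∈ Ioo (-ρ₁) ρ₁, ∀ t ∈ Ioo (-ρ₁) ρ₁, |ψ s - ψ t| ≤ D * |s - t| ^ θ) →
        (∀ P : Polynomial ℝ, P.natDegree ≤ K →
          κ₁ < sSup ((fun s => |ψ s + P.eval s|) '' Ico (0 : ℝ) 1) ∧
          κ₁ < sSup ((fun s => |ψ s + P.eval s|) '' Ioc (-1 : ℝ) 0)) →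
        ∀ ρ : ℝ, 0 < ρ → ρ ≤ 1 →
          ∀ c : ℝ, ∀ P : Polynomial ℝ, P.natDegree ≤ K → P.eval 0 = 0 →
            sSup ((fun s => |c * ψ s + P.eval s|) '' Ioo (-ρ) ρ)
              ≤ C * ρ ^ θ * sSup ((fun s => |c * ψ s + P.eval s|) '' Ioo (-ρ₁) ρ₁) := by
  obtain ⟨c₀, hc₀, hcoeff⟩ := coeff_bound_aux K hK
  have hKpos : (0:ℝ) < K := by exact_mod_cast hK
  refine ⟨D/κ₁ + (K:ℝ) * c₀ * (1 + D/κ₁) + 1, by positivity, ?_⟩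
  intro ρ₁ hρ₁ ψ hψ0 hψbd hψhol hpoly ρ hρ0 hρ1 c P hPdeg hP0
  set f : ℝ → ℝ := fun s => |c * ψ s + P.eval s| with hf
  set M := sSup (f '' Ioo (-ρ₁) ρ₁) with hM
  have hρ₁0 : (0:ℝ) < ρ₁ := lt_of_lt_of_le one_pos hρ₁
  have hdeg' : P.natDegree < K + 1 := Nat.lt_succ_of_le hPdeg
  have hPbig : ∀ s : ℝ, |s| ≤ ρ₁ →
      |P.eval s| ≤ ∑ i ∈ Finset.range (K+1), |P.coeff i| * ρ₁ ^ i := by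
    intro s hs
    rw [Polynomial.eval_eq_sum_range' hdeg']
    refine le_trans (Finset.abs_sum_le_sum_abs _ _) (Finset.sum_le_sum ?_)
    intro i _
    rw [abs_mul, abs_pow]
    exact mul_le_mul_of_nonneg_left (pow_le_pow_left₀ (abs_nonneg s) hs i) (abs_nonneg _)
  have hbdd : BddAbove (f '' Ioo (-ρ₁) ρ₁) := by
    refine ⟨|c| * D + ∑ i ∈ Finset.range (K+1), |P.coeff i| * ρ₁ ^ i, ?_⟩
    rintro x ⟨s, hs, rfl⟩
    have h1 : f s ≤ |c| * |ψ s| + |P.eval s| := by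
      calc f s ≤ |c * ψ s| + |P.eval s| := abs_add_le _ _
        _ = |c| * |ψ s| + |P.eval s| := by rw [abs_mul]
    refine le_trans h1 (add_le_add
      (mul_le_mul_of_nonneg_left (hψbd s hs) (abs_nonneg c)) (hPbig s ?_))
    exact (abs_lt.mpr ⟨hs.1, hs.2⟩).le
  have hMle : ∀ s ∈ Ioo (-ρ₁) ρ₁, f s ≤ M := fun s hs => le_csSup hbdd ⟨s, hs, rfl⟩
  have h0mem : (0:ℝ) ∈ Ioo (-ρ₁) ρ₁ := ⟨by linarith, by linarith⟩
  have hM0 : 0 ≤ M := le_trans (abs_nonneg _) (hMle 0 h0mem)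
  have hc : |c| * κ₁ ≤ M := by
    rcases eq_or_ne c 0 with rfl | hc0
    · simpa using hM0
    set Q := c⁻¹ • P with hQ
    have hQdeg : Q.natDegree ≤ K := le_trans (Polynomial.natDegree_smul_le _ _) hPdeg
    have h := (hpoly Q hQdeg).1
    have hex : ∃ s ∈ Ico (0:ℝ) 1, κ₁ < |ψ s + Q.eval s| := by
      by_contra hcon
      push_neg at hcon
      have : sSup ((fun s => |ψ s + Q.eval s|) '' Ico (0:ℝ) 1) ≤ κ₁ := by
        apply Real.sSup_le _ hκ₁.le
        rintro x ⟨s, hs, rfl⟩; exact hcon s hs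
      linarith
    obtain ⟨s, hs, hsg⟩ := hex
    have hsin : s ∈ Ioo (-ρ₁) ρ₁ := ⟨by linarith [hs.1], lt_of_lt_of_le hs.2 hρ₁⟩
    have hkey : |c| * |ψ s + Q.eval s| = f s := by
      rw [← abs_mul, hf]
      congr 1
      simp only [hQ, Polynomial.eval_smul, smul_eq_mul]
      field_simp
    calc |c| * κ₁ ≤ |c| * |ψ s + Q.eval s| :=
          mul_le_mul_of_nonneg_left hsg.le (abs_nonneg c)
      _ = f s := hkey
      _ ≤ M := hMle s hsin
  have hcM : |c| ≤ M / κ₁ := (le_div_iff₀ hκ₁).mpr hc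
  have hval : ∀ s ∈ Icc (0:ℝ) (1/2), |P.eval s| ≤ M * (1 + D/κ₁) := by
    intro s hs
    have hsin : s ∈ Ioo (-ρ₁) ρ₁ := ⟨by linarith [hs.1], by linarith [hs.2]⟩
    have h1 : |P.eval s| ≤ f s + |c| * |ψ s| := by
      calc |P.eval s| = |(c * ψ s + P.eval s) + (-(c * ψ s))| := by ring_nf
        _ ≤ |c * ψ s + P.eval s| + |(-(c * ψ s))| := abs_add_le _ _
        _ = f s + |c| * |ψ s| := by rw [abs_neg, abs_mul]
    have h2 : |c| * |ψ s| ≤ (M/κ₁) * D :=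
      mul_le_mul hcM (hψbd s hsin) (abs_nonneg _) (by positivity)
    have h3 : f s ≤ M := hMle s hsin
    have : M + (M/κ₁) * D = M * (1 + D/κ₁) := by field_simp
    linarith
  have hcf : ∀ i : ℕ, |P.coeff i| ≤ c₀ * (M * (1 + D/κ₁)) := hcoeff P hPdeg _ hval
  have hρθ : (0:ℝ) < ρ ^ θ := Real.rpow_pos_of_pos hρ0 θ
  have hρρθ : ρ ≤ ρ ^ θ := by
    have := Real.rpow_le_rpow_of_exponent_ge hρ0 hρ1 hθ1
    rwa [Real.rpow_one] at this
  apply Real.sSup_le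
  · rintro x ⟨s, hs, rfl⟩
    have habs : |s| < ρ := abs_lt.mpr ⟨hs.1, hs.2⟩
    have habs1 : |s| ≤ 1 := le_trans habs.le hρ1
    have hsin : s ∈ Ioo (-ρ₁) ρ₁ := by
      constructor
      · have := abs_lt.mp habs; linarith [this.1]
      · have := abs_lt.mp habs; linarith [this.2]
    have hψs : |ψ s| ≤ D * |s| ^ θ := by
      have := hψhol s hsin 0 h0mem
      simpa [hψ0] using this
    have hsθ : |s| ^ θ ≤ ρ ^ θ := Real.rpow_le_rpow (abs_nonneg s) habs.le hθ0.le
    have h1 : |c * ψ s| ≤ (M/κ₁) * (D * (ρ^θ)) := by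
      rw [abs_mul]
      have hψ2 : |ψ s| ≤ D * ρ^θ :=
        le_trans hψs (mul_le_mul_of_nonneg_left hsθ hD.le)
      exact mul_le_mul hcM hψ2 (abs_nonneg _) (by positivity)
    have h2 : |P.eval s| ≤ (K:ℝ) * (c₀ * (M * (1 + D/κ₁))) * ρ := by
      rw [Polynomial.eval_eq_sum_range' hdeg', Finset.sum_range_succ']
      have h00 : P.coeff 0 * s ^ 0 = 0 := by
        simp [Polynomial.coeff_zero_eq_eval_zero, hP0]
      rw [h00, add_zero]
      refine le_trans (Finset.abs_sum_le_sum_abs _ _) ?_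
      have hterm : ∀ i ∈ Finset.range K,
          |P.coeff (i+1) * s^(i+1)| ≤ c₀ * (M * (1 + D/κ₁)) * ρ := by
        intro i _
        rw [abs_mul, abs_pow]
        have hp : |s| ^ (i+1) ≤ ρ := by
          calc |s| ^ (i+1) = |s| * |s| ^ i := by ring
            _ ≤ |s| * 1 :=
              mul_le_mul_of_nonneg_left (pow_le_one₀ (abs_nonneg s) habs1) (abs_nonneg s)
            _ ≤ ρ := by rw [mul_one]; exact habs.le
        exact mul_le_mul (hcf (i+1)) hp (pow_nonneg (abs_nonneg s) _) (by positivity)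
      calc ∑ i ∈ Finset.range K, |P.coeff (i+1) * s^(i+1)|
          ≤ ∑ _i ∈ Finset.range K, c₀ * (M * (1 + D/κ₁)) * ρ := Finset.sum_le_sum hterm
        _ = (K:ℝ) * (c₀ * (M * (1 + D/κ₁)) * ρ) := by
            rw [Finset.sum_const, Finset.card_range, nsmul_eq_mul]
        _ = (K:ℝ) * (c₀ * (M * (1 + D/κ₁))) * ρ := by ring
    have h2' : |P.eval s| ≤ (K:ℝ) * (c₀ * (M * (1 + D/κ₁))) * ρ^θ := by
      refine le_trans h2 (mul_le_mul_of_nonneg_left hρρθ ?_)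
      positivity
    have hfinal : f s ≤ (M/κ₁)*(D*ρ^θ) + (K:ℝ)*(c₀*(M*(1+D/κ₁)))*ρ^θ := by
      calc f s ≤ |c * ψ s| + |P.eval s| := abs_add_le _ _
        _ ≤ _ := add_le_add h1 h2'
    have e1 : (M/κ₁)*(D*ρ^θ) = D/κ₁ * ρ^θ * M := by ring
    have e2 : (K:ℝ)*(c₀*(M*(1+D/κ₁)))*ρ^θ = (K:ℝ)*c₀*(1+D/κ₁)*ρ^θ*M := by ring
    nlinarith [mul_nonneg hρθ.le hM0]
  · positivity
end

section
/- Let (Ω, ℱ, ℙ) be a probability space equipped with a filtration (ℱ_k)_{k≥0}, and let (X_k)_{k≥1} be random variables with values in {0,1} such that X_k is ℱ_k-measurable for every k ≥ 1 and ℙ(X_k = 1 ∣ ℱ_{k−1}) ≥ η almost surely for every k ≥ 1, where η ∈ (0,1] is a constant. Then there exist η' > 0 and C > 0, depending only on η, such that for every integer m > C: ℙ( ∑_{k=1}^m X_k < η' m ) < e^{−η' m}. -/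
open MeasureTheory

/-- Large-deviation lower bound for an adapted `{0,1}`-valued process whose
conditional success probability, given the past, is at least `η` at every step: there exist
`η' > 0` and `C > 0`, depending only on `η`, such that for every integer `m > C`,
`ℙ(∑_{k=1}^m X_k < η' m) < e^{-η' m}`. -/
theorem adapted_coin_flip_large_deviation
    {Ω : Type*} {m0 : MeasurableSpace Ω} (ℙ : Measure Ω) [IsProbabilityMeasure ℙ]
    (ℱ : Filtration ℕ m0) (X : ℕ → Ω → ℝ) (η : ℝ) (hη0 : 0 < η) (hη1 : η ≤ 1)
    (hval : ∀ k : ℕ, 1 ≤ k → ∀ ω, X k ω = 0 ∨ X k ω = 1)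
    (hadapted : ∀ k : ℕ, 1 ≤ k → Measurable[ℱ k] (X k))
    (hcond : ∀ k : ℕ, 1 ≤ k →
      ∀ᵐ ω ∂ℙ, η ≤ (ℙ[Set.indicator {ω' | X k ω' = 1} (fun _ => (1 : ℝ)) | ℱ (k - 1)]) ω) :
    ∃ η' : ℝ, 0 < η' ∧ ∃ C : ℝ, 0 < C ∧
      ∀ m : ℕ, C < (m : ℝ) →
        ℙ {ω | ∑ k ∈ Finset.Icc 1 m, X k ω < η' * m} < ENNReal.ofReal (Real.exp (-η' * m)) := by
  classical
  set c : ℝ := 1 - Real.exp (-1) with hc_def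
  have hexp1 : (0:ℝ) < Real.exp (-1) := Real.exp_pos _
  have hexp1' : Real.exp (-1) < 1 := by
    rw [Real.exp_lt_one_iff]; norm_num
  have hc0 : 0 < c := by simp only [hc_def]; linarith
  have hc1 : c < 1 := by simp only [hc_def]; linarith
  set η' : ℝ := c * η / 3 with hη'_def
  have hη'0 : 0 < η' := by positivity
  have hcη1 : c * η ≤ 1 := by nlinarith
  -- measurability of each X k
  have hXmeas : ∀ k : ℕ, 1 ≤ k → Measurable (X k) :=
    fun k hk => (hadapted k hk).mono (ℱ.le k) le_rfl
  have hXnonneg : ∀ k : ℕ, 1 ≤ k → ∀ ω, 0 ≤ X k ω := by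
    intro k hk ω; rcases hval k hk ω with h | h <;> rw [h] <;> norm_num
  -- the exponential process
  set f : ℕ → Ω → ℝ := fun n ω => ∏ k ∈ Finset.Icc 1 n, Real.exp (-X k ω) with hf_def
  have hfpos : ∀ n ω, 0 < f n ω := fun n ω =>
    Finset.prod_pos fun k _ => Real.exp_pos _
  have hfle1 : ∀ n ω, f n ω ≤ 1 := by
    intro n ω
    refine Finset.prod_le_one (fun k _ => (Real.exp_pos _).le) (fun k hk => ?_)
    rw [Real.exp_le_one_iff]
    have := hXnonneg k (Finset.mem_Icc.mp hk).1 ω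
    linarith
  have hfmeas : ∀ n, Measurable (f n) := by
    intro n
    exact Finset.measurable_prod _ fun k hk =>
      ((hXmeas k (Finset.mem_Icc.mp hk).1).neg).exp
  have hfint : ∀ n, Integrable (f n) ℙ := by
    intro n
    refine Integrable.mono' (integrable_const 1) (hfmeas n).aestronglyMeasurable
      (Filter.Eventually.of_forall fun ω => ?_)
    rw [Real.norm_eq_abs, abs_of_pos (hfpos n ω)]; exact hfle1 n ω
  have hfsm : ∀ n, StronglyMeasurable[ℱ n] (f n) := by
    intro n
    refine Measurable.stronglyMeasurable ?_
    exact Finset.measurable_prod _ fun k hk =>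
      Measurable.exp (Measurable.neg
        ((hadapted k (Finset.mem_Icc.mp hk).1).mono (ℱ.mono (Finset.mem_Icc.mp hk).2) le_rfl))
  -- the key recursive bound
  have hstep : ∀ n : ℕ, ∫ ω, f (n + 1) ω ∂ℙ ≤ (1 - c * η) * ∫ ω, f n ω ∂ℙ := by
    intro n
    set g : Ω → ℝ := fun ω => Real.exp (-X (n + 1) ω) with hg_def
    set I : Ω → ℝ := Set.indicator {ω' | X (n + 1) ω' = 1} (fun _ => (1 : ℝ)) with hI_def
    have hgI : g = fun ω => 1 - c * I ω := by
      funext ω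
      rcases hval (n + 1) (Nat.le_add_left 1 n) ω with h | h
      · have : ω ∉ {ω' | X (n + 1) ω' = 1} := by simp [Set.mem_setOf_eq, h]
        simp [hg_def, hI_def, h, Set.indicator_of_notMem this]
      · have : ω ∈ {ω' | X (n + 1) ω' = 1} := h
        simp [hg_def, hI_def, h, Set.indicator_of_mem this, hc_def]
    have hImeas : Measurable I := by
      refine Measurable.indicator measurable_const ?_
      exact (hXmeas (n + 1) (Nat.le_add_left 1 n)) (measurableSet_singleton 1)
    have hIint : Integrable I ℙ := by
      refine Integrable.mono' (integrable_const 1) hImeas.aestronglyMeasurable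
        (Filter.Eventually.of_forall fun ω => ?_)
      by_cases h : ω ∈ {ω' | X (n + 1) ω' = 1}
      · simp [hI_def, Set.indicator_of_mem h]
      · simp [hI_def, Set.indicator_of_notMem h]
    have hgint : Integrable g ℙ := by
      rw [hgI]
      exact (integrable_const 1).sub (hIint.const_mul c)
    -- conditional expectation bound for g
    have hcond' : ∀ᵐ ω ∂ℙ, η ≤ (ℙ[I | ℱ n]) ω := by
      have := hcond (n + 1) (Nat.le_add_left 1 n)
      simpa [hI_def] using this
    have hcg : (ℙ[g | ℱ n]) =ᵐ[ℙ] fun ω => 1 - c * (ℙ[I | ℱ n]) ω := by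
      rw [hgI]
      have h1 : (fun ω => 1 - c * I ω) = (fun _ => (1:ℝ)) - c • I := by
        funext ω; simp [Pi.sub_apply, Pi.smul_apply, smul_eq_mul]
      rw [h1]
      calc ℙ[(fun _ => (1:ℝ)) - c • I | ℱ n]
          =ᵐ[ℙ] ℙ[(fun _ => (1:ℝ)) | ℱ n] - ℙ[c • I | ℱ n] :=
            condExp_sub (integrable_const 1) (hIint.smul c) _
        _ =ᵐ[ℙ] fun ω => 1 - c * (ℙ[I | ℱ n]) ω := by
            rw [condExp_const (ℱ.le n)]
            filter_upwards [condExp_smul (μ := ℙ) (m := ℱ n) c I] with ω h1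
            simp only [Pi.sub_apply, h1, Pi.smul_apply, smul_eq_mul]
    have hgbound : ∀ᵐ ω ∂ℙ, (ℙ[g | ℱ n]) ω ≤ 1 - c * η := by
      filter_upwards [hcg, hcond'] with ω h1 h2
      rw [h1]
      nlinarith
    -- pull-out
    have hfg : f (n + 1) = f n * g := by
      funext ω
      simp only [hf_def, hg_def, Pi.mul_apply]
      rw [Finset.prod_Icc_succ_top (Nat.le_add_left 1 n)]
    have hpull : (ℙ[f n * g | ℱ n]) =ᵐ[ℙ] f n * (ℙ[g | ℱ n]) :=
      condExp_mul_of_stronglyMeasurable_left (hfsm n) (by rw [← hfg]; exact hfint (n + 1)) hgint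
    have hint2 : Integrable (f n * (ℙ[g | ℱ n])) ℙ :=
      (integrable_condExp).congr hpull
    calc ∫ ω, f (n + 1) ω ∂ℙ = ∫ ω, (f n * g) ω ∂ℙ := by rw [hfg]
      _ = ∫ ω, (ℙ[f n * g | ℱ n]) ω ∂ℙ := (integral_condExp (ℱ.le n)).symm
      _ = ∫ ω, (f n * (ℙ[g | ℱ n])) ω ∂ℙ := integral_congr_ae hpull
      _ ≤ ∫ ω, (1 - c * η) * f n ω ∂ℙ := by
          refine integral_mono_ae hint2 ((hfint n).const_mul _) ?_
          filter_upwards [hgbound] with ω hb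
          simp only [Pi.mul_apply]
          calc f n ω * (ℙ[g | ℱ n]) ω ≤ f n ω * (1 - c * η) :=
                mul_le_mul_of_nonneg_left hb (hfpos n ω).le
            _ = (1 - c * η) * f n ω := mul_comm _ _
      _ = (1 - c * η) * ∫ ω, f n ω ∂ℙ := integral_const_mul _ _
  -- induction: ∫ f m ≤ (1 - cη)^m
  have hind : ∀ n : ℕ, ∫ ω, f n ω ∂ℙ ≤ (1 - c * η) ^ n := by
    intro n
    induction n with
    | zero => simp [hf_def]
    | succ n ih =>
      calc ∫ ω, f (n + 1) ω ∂ℙ ≤ (1 - c * η) * ∫ ω, f n ω ∂ℙ := hstep n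
        _ ≤ (1 - c * η) * (1 - c * η) ^ n :=
            mul_le_mul_of_nonneg_left ih (by linarith)
        _ = (1 - c * η) ^ (n + 1) := (pow_succ' _ _).symm
  refine ⟨η', hη'0, 1, one_pos, ?_⟩
  intro m hm
  have hm1 : (1:ℝ) < m := hm
  have hm0 : (0:ℝ) < m := by linarith
  -- exponential bound on the integral
  have hexpbound : ∫ ω, f m ω ∂ℙ ≤ Real.exp (-(c * η) * m) := by
    calc ∫ ω, f m ω ∂ℙ ≤ (1 - c * η) ^ m := hind m
      _ ≤ (Real.exp (-(c * η))) ^ m := by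
          refine pow_le_pow_left₀ (by linarith) ?_ m
          have := Real.add_one_le_exp (-(c * η))
          linarith
      _ = Real.exp (-(c * η) * m) := by
          rw [← Real.exp_nat_mul]; ring_nf
  -- Markov
  set S : Set Ω := {ω | ∑ k ∈ Finset.Icc 1 m, X k ω < η' * m} with hS_def
  set ε : ℝ := Real.exp (-η' * m) with hε_def
  have hε0 : 0 < ε := Real.exp_pos _
  have hsub : S ⊆ {ω | ε ≤ f m ω} := by
    intro ω hω
    have hsum : ∑ k ∈ Finset.Icc 1 m, X k ω < η' * m := hω
    have hfeq : f m ω = Real.exp (-∑ k ∈ Finset.Icc 1 m, X k ω) := by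
      simp only [hf_def]
      rw [← Real.exp_sum]
      congr 1
      rw [← Finset.sum_neg_distrib]
    rw [Set.mem_setOf_eq, hfeq, hε_def]
    apply Real.exp_le_exp.mpr
    linarith
  have hmarkov : ε * (ℙ {ω | ε ≤ f m ω}).toReal ≤ ∫ ω, f m ω ∂ℙ :=
    mul_meas_ge_le_integral_of_nonneg
      (Filter.Eventually.of_forall fun ω => (hfpos m ω).le) (hfint m) ε
  have htoReal : (ℙ S).toReal ≤ Real.exp (-(c * η) * m) / ε := by
    have h1 : (ℙ S).toReal ≤ (ℙ {ω | ε ≤ f m ω}).toReal :=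
      ENNReal.toReal_mono (measure_ne_top _ _) (measure_mono hsub)
    have h2 : (ℙ {ω | ε ≤ f m ω}).toReal ≤ Real.exp (-(c * η) * m) / ε := by
      rw [le_div_iff₀ hε0]
      calc (ℙ {ω | ε ≤ f m ω}).toReal * ε = ε * (ℙ {ω | ε ≤ f m ω}).toReal := mul_comm _ _
        _ ≤ ∫ ω, f m ω ∂ℙ := hmarkov
        _ ≤ Real.exp (-(c * η) * m) := hexpbound
    linarith
  have hfinal : Real.exp (-(c * η) * m) / ε < Real.exp (-η' * m) := by
    rw [hε_def, ← Real.exp_sub]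
    apply Real.exp_lt_exp.mpr
    have h3 : c * η = 3 * η' := by rw [hη'_def]; ring
    nlinarith [mul_pos hη'0 hm0]
  have : (ℙ S).toReal < Real.exp (-η' * m) := lt_of_le_of_lt htoReal hfinal
  calc ℙ S = ENNReal.ofReal ((ℙ S).toReal) := (ENNReal.ofReal_toReal (measure_ne_top _ _)).symm
    _ < ENNReal.ofReal (Real.exp (-η' * m)) := by
        rw [ENNReal.ofReal_lt_ofReal_iff (Real.exp_pos _)]
        exact this
end

section
/- Let (X, 𝒜, μ) be a probability space, n₁ ≥ 1 an integer, and σ : X → X a measurable map such that μ is invariant under σ^{n₁}. Let Ω̃ ∈ 𝒜, and let (Ω_j)_{j≥1} be measurable subsets of Ω̃. Assume that for μ-a.e. x ∈ X the set {n ≥ 1 : σ^{n n₁}(x) ∈ Ω̃} is infinite; for such x define τ(x) = min{n ≥ 1 : σ^{n n₁}(x) ∈ Ω̃}, σ_Ω̃(x) = σ^{τ(x) n₁}(x), R₀(x) = 0 and R_k(x) = τ(x) + R_{k−1}(σ_Ω̃(x)) for k ≥ 1 (so R_k(x) is the index n of the k-th visit of x to Ω̃ along the times n n₁). For integers m ≥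 1, l ≥ 0 and η ∈ (0,1) set C_{m,l,η} = { x ∈ Ω̃ : #{1 ≤ j ≤ m : σ_Ω̃^j(x) ∈ Ω_{l + R_j(x)} } < η m }; for an integer L ≥ 1 and η ∈ (0,1) set A_{L,η} = { x ∈ X : #{1 ≤ j ≤ L : σ^{j n₁}(x) ∈ Ω_j} < η L } and B_{L,η} = { x ∈ X : #{1 ≤ j ≤ L : σ^{j n₁}(x) ∈ Ω̃} < η L }. Suppose there exist η₃, η₄ ∈ (0,1) and constants C₄, C' > 0 such that μ(B_{L,η₃}) < e^{−L η₃} for every integer L > C₄, and μ(C_{m,l,η₄}) < e^{−m η₄} for every integer l ≥ 0 and every integer m > C'. Then, setting κ₃ = min(η₃, η₃ η₄)/2, there exists C₅ > 0 such that μ(A_{L,κ₃}) < e^{−L κ₃} for every integer L > C₅. -/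
open MeasureTheory Set

noncomputable section

/-- The first entry time `τ(x) = min {n ≥ 1 : σ^{n n₁}(x) ∈ Ω̃}` (junk value `0` if the orbit
never enters `Ω̃`). -/
def firstEntryTime {X : Type*} (σ : X → X) (n₁ : ℕ) (Om : Set X) (x : X) : ℕ :=
  sInf {n : ℕ | 1 ≤ n ∧ σ^[n * n₁] x ∈ Om}

/-- The first return map `σ_Ω̃(x) = σ^{τ(x) n₁}(x)` of the iterate `σ^{n₁}` to `Ω̃`. -/
def firstReturnMap {X : Type*} (σ : X → X) (n₁ : ℕ) (Om : Set X) (x : X) : X :=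
  σ^[firstEntryTime σ n₁ Om x * n₁] x

/-- The cumulative return times: `R₀(x) = 0` and `R_k(x) = τ(x) + R_{k-1}(σ_Ω̃(x))`. -/
def cumulativeReturnTime {X : Type*} (σ : X → X) (n₁ : ℕ) (Om : Set X) : ℕ → X → ℕ
  | 0, _ => 0
  | k + 1, x =>
      firstEntryTime σ n₁ Om x + cumulativeReturnTime σ n₁ Om k (firstReturnMap σ n₁ Om x)

section Aux
variable {X : Type*} (σ : X → X) (n₁ : ℕ) (Om : Set X)

/-- Goodness: the orbit visits `Om` infinitely often. -/
def RecGood (x : X) : Prop := {n : ℕ | 1 ≤ n ∧ σ^[n * n₁] x ∈ Om}.Infinite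

variable {σ n₁ Om}

lemma iterate_firstReturnMap (k : ℕ) (x : X) :
    (firstReturnMap σ n₁ Om)^[k] x = σ^[cumulativeReturnTime σ n₁ Om k x * n₁] x := by
  induction k generalizing x with
  | zero => simp [cumulativeReturnTime]
  | succ k ih =>
    rw [Function.iterate_succ_apply, ih, firstReturnMap, ← Function.iterate_add_apply]
    congr 1
    show cumulativeReturnTime σ n₁ Om k (firstReturnMap σ n₁ Om x) * n₁
        + firstEntryTime σ n₁ Om x * n₁
      = cumulativeReturnTime σ n₁ Om (k+1) x * n₁
    simp only [cumulativeReturnTime]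
    ring

lemma shift_iterate (t n : ℕ) (x : X) :
    σ^[n * n₁] (σ^[t * n₁] x) = σ^[(n + t) * n₁] x := by
  rw [← Function.iterate_add_apply]
  congr 1
  ring

lemma firstEntry_spec {x : X} (hx : RecGood σ n₁ Om x) :
    1 ≤ firstEntryTime σ n₁ Om x ∧ firstReturnMap σ n₁ Om x ∈ Om :=
  Nat.sInf_mem hx.nonempty

lemma recGood_firstReturnMap {x : X} (hx : RecGood σ n₁ Om x) :
    RecGood σ n₁ Om (firstReturnMap σ n₁ Om x) := by
  set t := firstEntryTime σ n₁ Om x with ht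
  have h1 : ({n : ℕ | 1 ≤ n ∧ σ^[n * n₁] x ∈ Om} \ Set.Iic t).Infinite :=
    hx.diff (Set.finite_Iic t)
  have h2 : ({n : ℕ | 1 ≤ n ∧ σ^[n * n₁] x ∈ Om} \ Set.Iic t)
      ⊆ (fun n => n + t) '' {n : ℕ | 1 ≤ n ∧ σ^[n * n₁] (firstReturnMap σ n₁ Om x) ∈ Om} := by
    rintro m ⟨⟨hm1, hm2⟩, hm3⟩
    simp only [Set.mem_Iic, not_le] at hm3
    refine ⟨m - t, ⟨by omega, ?_⟩, show m - t + t = m by omega⟩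
    rw [firstReturnMap, ← ht, shift_iterate]
    have : m - t + t = m := by omega
    rwa [this]
  exact Set.Infinite.of_image _ (h1.mono h2)

lemma recGood_iterate {x : X} (hx : RecGood σ n₁ Om x) (k : ℕ) :
    RecGood σ n₁ Om ((firstReturnMap σ n₁ Om)^[k] x) := by
  induction k with
  | zero => exact hx
  | succ k ih =>
    rw [Function.iterate_succ_apply']
    exact recGood_firstReturnMap ih

lemma cumulative_succ_right (k : ℕ) (x : X) :
    cumulativeReturnTime σ n₁ Om (k + 1) x
      = cumulativeReturnTime σ n₁ Om k x
        + firstEntryTime σ n₁ Om ((firstReturnMap σ n₁ Om)^[k] x) := by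
  induction k generalizing x with
  | zero => simp [cumulativeReturnTime]
  | succ k ih =>
    show firstEntryTime σ n₁ Om x + cumulativeReturnTime σ n₁ Om (k+1) (firstReturnMap σ n₁ Om x) = _
    rw [ih]
    simp only [cumulativeReturnTime, Function.iterate_succ_apply]
    omega

lemma cumulative_strictMono {x : X} (hx : RecGood σ n₁ Om x) :
    StrictMono (fun k => cumulativeReturnTime σ n₁ Om k x) := by
  apply strictMono_nat_of_lt_succ
  intro k
  have h1 := (firstEntry_spec (recGood_iterate hx k)).1
  have := cumulative_succ_right (σ := σ) (n₁ := n₁) (Om := Om) k x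
  omega

lemma cumulative_ge {x : X} (hx : RecGood σ n₁ Om x) (k : ℕ) :
    k ≤ cumulativeReturnTime σ n₁ Om k x :=
  (cumulative_strictMono hx).le_apply

lemma cumulative_mem {x : X} (hx : RecGood σ n₁ Om x) {j : ℕ} (hj : 1 ≤ j) :
    1 ≤ cumulativeReturnTime σ n₁ Om j x ∧
      σ^[cumulativeReturnTime σ n₁ Om j x * n₁] x ∈ Om := by
  constructor
  · exact le_trans hj (cumulative_ge hx j)
  · rw [← iterate_firstReturnMap]
    obtain ⟨i, rfl⟩ : ∃ i, j = i + 1 := ⟨j - 1, by omega⟩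
    rw [Function.iterate_succ_apply']
    exact (firstEntry_spec (recGood_iterate hx i)).2

lemma entry_eq_cumulative :
    ∀ n : ℕ, ∀ x : X, RecGood σ n₁ Om x → 1 ≤ n → σ^[n * n₁] x ∈ Om →
      ∃ j, 1 ≤ j ∧ n = cumulativeReturnTime σ n₁ Om j x := by
  intro n
  induction n using Nat.strong_induction_on with
  | _ n ih =>
    intro x hx h1 h2
    have hτn : firstEntryTime σ n₁ Om x ≤ n := Nat.sInf_le ⟨h1, h2⟩
    have hτ1 : 1 ≤ firstEntryTime σ n₁ Om x := (firstEntry_spec hx).1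
    rcases eq_or_lt_of_le hτn with heq | hlt
    · exact ⟨1, le_refl 1, by simp [cumulativeReturnTime, ← heq]⟩
    · have hmem : σ^[(n - firstEntryTime σ n₁ Om x) * n₁] (firstReturnMap σ n₁ Om x) ∈ Om := by
        rw [firstReturnMap, shift_iterate]
        have : n - firstEntryTime σ n₁ Om x + firstEntryTime σ n₁ Om x = n := by omega
        rwa [this]
      obtain ⟨j, hj1, hj2⟩ := ih (n - firstEntryTime σ n₁ Om x) (by omega)
        (firstReturnMap σ n₁ Om x) (recGood_firstReturnMap hx) (by omega) hmem
      refine ⟨j + 1, by omega, ?_⟩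
      show n = firstEntryTime σ n₁ Om x + cumulativeReturnTime σ n₁ Om j (firstReturnMap σ n₁ Om x)
      omega

end Aux

section Aux2
variable {X : Type*} {σ : X → X} {n₁ : ℕ} {Om : Set X}

lemma card_visits_le {x : X} (hx : RecGood σ n₁ Om x) {L m : ℕ}
    (h : m + 1 ≤ Nat.card {j : ℕ | 1 ≤ j ∧ j ≤ L ∧ σ^[j * n₁] x ∈ Om}) :
    cumulativeReturnTime σ n₁ Om (m + 1) x ≤ L := by
  by_contra hL
  push_neg at hL
  have hsub : {j : ℕ | 1 ≤ j ∧ j ≤ L ∧ σ^[j * n₁] x ∈ Om}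
      ⊆ (fun j => cumulativeReturnTime σ n₁ Om j x) '' (Set.Icc 1 m) := by
    rintro n ⟨h1, h2, h3⟩
    obtain ⟨j, hj1, hj2⟩ := entry_eq_cumulative n x hx h1 h3
    refine ⟨j, ⟨hj1, ?_⟩, hj2.symm⟩
    by_contra hjm
    push_neg at hjm
    have : cumulativeReturnTime σ n₁ Om (m + 1) x ≤ cumulativeReturnTime σ n₁ Om j x :=
      (cumulative_strictMono hx).monotone (by omega)
    omega
  have hcard : Nat.card {j : ℕ | 1 ≤ j ∧ j ≤ L ∧ σ^[j * n₁] x ∈ Om} ≤ m := by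
    rw [Nat.card_coe_set_eq]
    calc {j : ℕ | 1 ≤ j ∧ j ≤ L ∧ σ^[j * n₁] x ∈ Om}.ncard
        ≤ ((fun j => cumulativeReturnTime σ n₁ Om j x) '' (Set.Icc 1 m)).ncard :=
          Set.ncard_le_ncard hsub ((Set.finite_Icc 1 m).image _)
      _ ≤ (Set.Icc 1 m).ncard := Set.ncard_image_le (Set.finite_Icc 1 m)
      _ = m := by rw [← Finset.coe_Icc, Set.ncard_coe_finset, Nat.card_Icc]; omega
  omega

lemma card_compare (Omj : ℕ → Set X) {x : X} (hx : RecGood σ n₁ Om x) {L m : ℕ}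
    (hLm : cumulativeReturnTime σ n₁ Om (m + 1) x ≤ L) :
    Nat.card {j : ℕ | 1 ≤ j ∧ j ≤ m ∧
        (firstReturnMap σ n₁ Om)^[j] (firstReturnMap σ n₁ Om x)
          ∈ Omj (firstEntryTime σ n₁ Om x
              + cumulativeReturnTime σ n₁ Om j (firstReturnMap σ n₁ Om x))}
      ≤ Nat.card {n : ℕ | 1 ≤ n ∧ n ≤ L ∧ σ^[n * n₁] x ∈ Omj n} := by
  rw [Nat.card_coe_set_eq, Nat.card_coe_set_eq]
  have hdef : ∀ j : ℕ, cumulativeReturnTime σ n₁ Om (j + 1) x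
      = firstEntryTime σ n₁ Om x + cumulativeReturnTime σ n₁ Om j (firstReturnMap σ n₁ Om x) :=
    fun j => rfl
  refine Set.ncard_le_ncard_of_injOn (fun j => cumulativeReturnTime σ n₁ Om (j + 1) x) ?_ ?_ ?_
  · rintro j ⟨hj1, hj2, hj3⟩
    have h1 : 1 ≤ cumulativeReturnTime σ n₁ Om (j + 1) x :=
      le_trans (by omega) (cumulative_ge hx (j + 1))
    have h2 : cumulativeReturnTime σ n₁ Om (j + 1) x ≤ L :=
      le_trans ((cumulative_strictMono hx).monotone (by omega)) hLm
    have h3 : σ^[cumulativeReturnTime σ n₁ Om (j + 1) x * n₁] x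
        ∈ Omj (cumulativeReturnTime σ n₁ Om (j + 1) x) := by
      rw [← iterate_firstReturnMap, Function.iterate_succ_apply, hdef j]
      exact hj3
    exact ⟨h1, h2, h3⟩
  · intro a _ b _ hab
    have := (cumulative_strictMono hx).injective hab
    omega
  · apply Set.Finite.subset (Set.finite_Icc 1 L)
    rintro n ⟨h1, h2, _⟩
    exact ⟨h1, h2⟩

lemma measure_preimage_le_of_measurePreserving {α β : Type*} [MeasurableSpace α]
    [MeasurableSpace β] {f : α → β} {μa : Measure α} {μb : Measure β}
    (hf : MeasurePreserving f μa μb) (s : Set β) : μa (f ⁻¹' s) ≤ μb s := by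
  calc μa (f ⁻¹' s) ≤ μa (f ⁻¹' (toMeasurable μb s)) :=
        measure_mono (Set.preimage_mono (subset_toMeasurable _ _))
    _ = μb (toMeasurable μb s) :=
        hf.measure_preimage (measurableSet_toMeasurable _ _).nullMeasurableSet
    _ = μb s := measure_toMeasurable s

end Aux2


set_option maxHeartbeats 1000000 in
/-- (Abstract recurrence transfer, cf. Lemma on exponential recurrence.)
Given a probability space `(X, 𝒜, μ)`, `σ` measurable with `μ` invariant under `σ^{n₁}`,
a measurable set `Ω̃`, measurable subsets `Ω_j ⊆ Ω̃`, and the exponential estimates for the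
sets `B_{L,η₃}` and `C_{m,l,η₄}`, one gets, with `κ₃ = min(η₃, η₃ η₄)/2`, the exponential
estimate `μ(A_{L,κ₃}) < e^{-L κ₃}` for all sufficiently large `L`. -/
theorem recurrence_transfer
    {X : Type*} [MeasurableSpace X] (μ : Measure X) [IsProbabilityMeasure μ]
    (n₁ : ℕ) (hn₁ : 1 ≤ n₁) (σ : X → X) (hσ : Measurable σ)
    (hinv : MeasurePreserving (σ^[n₁]) μ μ)
    (Om : Set X) (hOm : MeasurableSet Om)
    (Omj : ℕ → Set X) (hOmj : ∀ j : ℕ, 1 ≤ j → MeasurableSet (Omj j) ∧ Omj j ⊆ Om)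
    (hrec : ∀ᵐ x ∂μ, {n : ℕ | 1 ≤ n ∧ σ^[n * n₁] x ∈ Om}.Infinite)
    (η₃ η₄ C₄ C' : ℝ)
    (hη₃ : η₃ ∈ Ioo (0 : ℝ) 1) (hη₄ : η₄ ∈ Ioo (0 : ℝ) 1) (hC₄ : 0 < C₄) (hC' : 0 < C')
    (hB : ∀ L : ℕ, C₄ < (L : ℝ) →
      μ {x : X | (Nat.card {j : ℕ | 1 ≤ j ∧ j ≤ L ∧ σ^[j * n₁] x ∈ Om} : ℝ) < η₃ * L}
        < ENNReal.ofReal (Real.exp (-(L : ℝ) * η₃)))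
    (hC : ∀ l : ℕ, ∀ m : ℕ, C' < (m : ℝ) →
      μ {x : X | x ∈ Om ∧
            (Nat.card {j : ℕ | 1 ≤ j ∧ j ≤ m ∧
                (firstReturnMap σ n₁ Om)^[j] x ∈ Omj (l + cumulativeReturnTime σ n₁ Om j x)} : ℝ)
              < η₄ * m}
        < ENNReal.ofReal (Real.exp (-(m : ℝ) * η₄))) :
    ∃ C₅ : ℝ, 0 < C₅ ∧
      ∀ L : ℕ, C₅ < (L : ℝ) →
        μ {x : X | (Nat.card {j : ℕ | 1 ≤ j ∧ j ≤ L ∧ σ^[j * n₁] x ∈ Omj j} : ℝ)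
              < min η₃ (η₃ * η₄) / 2 * L}
          < ENNReal.ofReal (Real.exp (-(L : ℝ) * (min η₃ (η₃ * η₄) / 2))) := by
  obtain ⟨hη₃0, hη₃1⟩ := hη₃
  obtain ⟨hη₄0, hη₄1⟩ := hη₄
  set κ : ℝ := min η₃ (η₃ * η₄) / 2 with hκdef
  have hκmin : min η₃ (η₃ * η₄) > 0 := lt_min hη₃0 (mul_pos hη₃0 hη₄0)
  have hκ0 : 0 < κ := by rw [hκdef]; linarith
  have hκa : κ < η₃ := by
    have := min_le_left η₃ (η₃ * η₄)
    rw [hκdef]; linarith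
  have hκb : κ < η₃ * η₄ := by
    have := min_le_right η₃ (η₃ * η₄)
    have : min η₃ (η₃ * η₄) ≤ η₃ * η₄ := this
    rw [hκdef]
    nlinarith [mul_pos hη₃0 hη₄0]
  have ha : (0:ℝ) < η₃ - κ := by linarith
  have hb : (0:ℝ) < η₃ * η₄ - κ := by linarith
  -- the eventual smallness of the error factor
  have t1 : Filter.Tendsto (fun L : ℕ => Real.exp (-(L:ℝ) * (η₃ - κ))) Filter.atTop (nhds 0) := by
    have he : ∀ L : ℕ, Real.exp (-(L:ℝ) * (η₃ - κ)) = (Real.exp (-(η₃ - κ)))^L := by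
      intro L
      rw [← Real.exp_nat_mul]
      congr 1
      ring
    simp only [he]
    exact tendsto_pow_atTop_nhds_zero_of_lt_one (Real.exp_nonneg _)
      (Real.exp_lt_one_iff.mpr (by linarith))
  have t2 : Filter.Tendsto (fun L : ℕ => (L:ℝ) * Real.exp (-(L:ℝ) * (η₃ * η₄ - κ)))
      Filter.atTop (nhds 0) := by
    have he : ∀ L : ℕ, (L:ℝ) * Real.exp (-(L:ℝ) * (η₃ * η₄ - κ))
        = (L:ℝ) * (Real.exp (-(η₃ * η₄ - κ)))^L := by
      intro L
      rw [← Real.exp_nat_mul]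
      congr 2
      ring
    simp only [he]
    exact tendsto_self_mul_const_pow_of_lt_one (Real.exp_nonneg _)
      (Real.exp_lt_one_iff.mpr (by linarith))
  have hh : Filter.Tendsto (fun L : ℕ => Real.exp (-(L:ℝ) * (η₃ - κ))
      + Real.exp η₄ * ((L:ℝ) * Real.exp (-(L:ℝ) * (η₃ * η₄ - κ))))
      Filter.atTop (nhds (0 + Real.exp η₄ * 0)) :=
    t1.add (Filter.Tendsto.mul tendsto_const_nhds t2)
  have hev : ∀ᶠ L : ℕ in Filter.atTop, Real.exp (-(L:ℝ) * (η₃ - κ))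
      + Real.exp η₄ * ((L:ℝ) * Real.exp (-(L:ℝ) * (η₃ * η₄ - κ))) < 1 :=
    Filter.Tendsto.eventually_lt_const (show (0:ℝ) + Real.exp η₄ * 0 < 1 by norm_num) hh
  obtain ⟨N, hN⟩ := Filter.eventually_atTop.mp hev
  set M : ℝ := max (max C₄ ((C' + 2) / η₃)) (max (N:ℝ) (2 / η₃)) with hMdef
  refine ⟨M + 1, ?_, ?_⟩
  · have : C₄ ≤ M := le_trans (le_max_left _ _) (le_max_left _ _)
    linarith
  intro L hL
  have hML : M < (L:ℝ) := by linarith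
  have hC₄L : C₄ < (L:ℝ) :=
    lt_of_le_of_lt (le_trans (le_max_left _ _) (le_max_left _ _)) hML
  have hC'L : (C' + 2) / η₃ < (L:ℝ) :=
    lt_of_le_of_lt (le_trans (le_max_right _ _) (le_max_left _ _)) hML
  have hNL : N ≤ L := by
    have : (N:ℝ) < (L:ℝ) := lt_of_le_of_lt (le_trans (le_max_left _ _) (le_max_right _ _)) hML
    exact_mod_cast this.le
  have h2L : 2 < η₃ * L := by
    have h2 : 2 / η₃ < (L:ℝ) :=
      lt_of_le_of_lt (le_trans (le_max_right _ _) (le_max_right _ _)) hML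
    rw [div_lt_iff₀ hη₃0] at h2
    linarith [h2]
  have hCL : C' + 2 < η₃ * L := by
    rw [div_lt_iff₀ hη₃0] at hC'L
    linarith [hC'L]
  have hL0 : (0:ℝ) < (L:ℝ) := by nlinarith
  -- set up m
  set m : ℕ := ⌈η₃ * (L:ℝ)⌉₊ - 1 with hmdef
  have hceil : 1 ≤ ⌈η₃ * (L:ℝ)⌉₊ := Nat.one_le_iff_ne_zero.mpr (by
    simp only [ne_eq, Nat.ceil_eq_zero, not_le]
    positivity)
  have hm1 : m + 1 = ⌈η₃ * (L:ℝ)⌉₊ := by omega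
  have hm2 : η₃ * L - 1 ≤ (m:ℝ) := by
    have h := Nat.le_ceil (η₃ * (L:ℝ))
    have h2 : ((m:ℕ) + 1 : ℝ) = (⌈η₃ * (L:ℝ)⌉₊ : ℝ) := by exact_mod_cast congrArg Nat.cast hm1
    push_cast at h2
    linarith
  have hmC' : C' < (m:ℝ) := by linarith
  have hκL : κ * L ≤ η₄ * m := by
    have hmin2 : κ ≤ η₃ * η₄ / 2 := by
      rw [hκdef]
      have := min_le_right η₃ (η₃ * η₄)
      linarith
    nlinarith [mul_le_mul_of_nonneg_left hm2 hη₄0.le,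
      mul_le_mul_of_nonneg_right hmin2 hL0.le,
      mul_nonneg hη₄0.le (sub_nonneg.mpr h2L.le)]
  -- set inclusion
  have hsub : {x : X | (Nat.card {j : ℕ | 1 ≤ j ∧ j ≤ L ∧ σ^[j * n₁] x ∈ Omj j} : ℝ) < κ * L}
      ⊆ {x : X | ¬ RecGood σ n₁ Om x}
        ∪ ({x : X | (Nat.card {j : ℕ | 1 ≤ j ∧ j ≤ L ∧ σ^[j * n₁] x ∈ Om} : ℝ) < η₃ * L}
          ∪ ⋃ t ∈ Finset.Icc 1 L, (σ^[n₁])^[t] ⁻¹'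
              {y : X | y ∈ Om ∧ (Nat.card {j : ℕ | 1 ≤ j ∧ j ≤ m ∧
                  (firstReturnMap σ n₁ Om)^[j] y
                    ∈ Omj (t + cumulativeReturnTime σ n₁ Om j y)} : ℝ) < η₄ * m}) := by
    intro x hxA
    by_cases hg : RecGood σ n₁ Om x
    swap
    · exact Or.inl hg
    right
    by_cases hb' : (Nat.card {j : ℕ | 1 ≤ j ∧ j ≤ L ∧ σ^[j * n₁] x ∈ Om} : ℝ) < η₃ * L
    · exact Or.inl hb'
    right
    push_neg at hb'
    have hcard : m + 1 ≤ Nat.card {j : ℕ | 1 ≤ j ∧ j ≤ L ∧ σ^[j * n₁] x ∈ Om} := by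
      rw [hm1]
      exact Nat.ceil_le.mpr hb'
    have hR := card_visits_le hg hcard
    have ht1 : 1 ≤ firstEntryTime σ n₁ Om x := (firstEntry_spec hg).1
    have htR : firstEntryTime σ n₁ Om x ≤ cumulativeReturnTime σ n₁ Om (m+1) x := by
      have h1 : cumulativeReturnTime σ n₁ Om 1 x = firstEntryTime σ n₁ Om x := by
        simp [cumulativeReturnTime]
      have h2 := (cumulative_strictMono hg).monotone (show 1 ≤ m+1 by omega)
      omega
    have ht2 : firstEntryTime σ n₁ Om x ≤ L := le_trans htR hR
    refine Set.mem_iUnion₂.mpr ⟨firstEntryTime σ n₁ Om x, Finset.mem_Icc.mpr ⟨ht1, ht2⟩, ?_⟩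
    have hyx : (σ^[n₁])^[firstEntryTime σ n₁ Om x] x = firstReturnMap σ n₁ Om x := by
      have h1 : (σ^[n₁])^[firstEntryTime σ n₁ Om x] = σ^[n₁ * firstEntryTime σ n₁ Om x] :=
        (Function.iterate_mul σ n₁ (firstEntryTime σ n₁ Om x)).symm
      rw [h1, firstReturnMap, mul_comm]
    rw [Set.mem_preimage, hyx]
    refine ⟨(firstEntry_spec hg).2, ?_⟩
    have hcmp := card_compare Omj hg hR
    have hcast : (Nat.card {j : ℕ | 1 ≤ j ∧ j ≤ m ∧
        (firstReturnMap σ n₁ Om)^[j] (firstReturnMap σ n₁ Om x)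
          ∈ Omj (firstEntryTime σ n₁ Om x
            + cumulativeReturnTime σ n₁ Om j (firstReturnMap σ n₁ Om x))} : ℝ)
        ≤ (Nat.card {n : ℕ | 1 ≤ n ∧ n ≤ L ∧ σ^[n * n₁] x ∈ Omj n} : ℝ) := by
      exact_mod_cast hcmp
    calc (Nat.card {j : ℕ | 1 ≤ j ∧ j ≤ m ∧
        (firstReturnMap σ n₁ Om)^[j] (firstReturnMap σ n₁ Om x)
          ∈ Omj (firstEntryTime σ n₁ Om x
            + cumulativeReturnTime σ n₁ Om j (firstReturnMap σ n₁ Om x))} : ℝ)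
        ≤ (Nat.card {n : ℕ | 1 ≤ n ∧ n ≤ L ∧ σ^[n * n₁] x ∈ Omj n} : ℝ) := hcast
      _ < κ * L := hxA
      _ ≤ η₄ * m := hκL
  -- measure estimates
  have hbad : μ {x : X | ¬ RecGood σ n₁ Om x} = 0 := ae_iff.mp hrec
  have hUle : μ (⋃ t ∈ Finset.Icc 1 L, (σ^[n₁])^[t] ⁻¹'
      {y : X | y ∈ Om ∧ (Nat.card {j : ℕ | 1 ≤ j ∧ j ≤ m ∧
          (firstReturnMap σ n₁ Om)^[j] y
            ∈ Omj (t + cumulativeReturnTime σ n₁ Om j y)} : ℝ) < η₄ * m})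
      ≤ (L : ENNReal) * ENNReal.ofReal (Real.exp (-(m:ℝ) * η₄)) := by
    refine le_trans (measure_biUnion_finset_le _ _) ?_
    refine le_trans (Finset.sum_le_sum fun t _ =>
      le_trans (measure_preimage_le_of_measurePreserving (hinv.iterate t) _)
        (hC t m hmC').le) ?_
    rw [Finset.sum_const, Nat.card_Icc, nsmul_eq_mul]
    norm_num
  calc μ {x : X | (Nat.card {j : ℕ | 1 ≤ j ∧ j ≤ L ∧ σ^[j * n₁] x ∈ Omj j} : ℝ) < κ * L}
      ≤ μ ({x : X | ¬ RecGood σ n₁ Om x}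
        ∪ ({x : X | (Nat.card {j : ℕ | 1 ≤ j ∧ j ≤ L ∧ σ^[j * n₁] x ∈ Om} : ℝ) < η₃ * L}
          ∪ ⋃ t ∈ Finset.Icc 1 L, (σ^[n₁])^[t] ⁻¹'
              {y : X | y ∈ Om ∧ (Nat.card {j : ℕ | 1 ≤ j ∧ j ≤ m ∧
                  (firstReturnMap σ n₁ Om)^[j] y
                    ∈ Omj (t + cumulativeReturnTime σ n₁ Om j y)} : ℝ) < η₄ * m})) :=
        measure_mono hsub
    _ ≤ μ {x : X | ¬ RecGood σ n₁ Om x}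
        + μ ({x : X | (Nat.card {j : ℕ | 1 ≤ j ∧ j ≤ L ∧ σ^[j * n₁] x ∈ Om} : ℝ) < η₃ * L}
          ∪ ⋃ t ∈ Finset.Icc 1 L, (σ^[n₁])^[t] ⁻¹'
              {y : X | y ∈ Om ∧ (Nat.card {j : ℕ | 1 ≤ j ∧ j ≤ m ∧
                  (firstReturnMap σ n₁ Om)^[j] y
                    ∈ Omj (t + cumulativeReturnTime σ n₁ Om j y)} : ℝ) < η₄ * m}) :=
        measure_union_le _ _
    _ = μ ({x : X | (Nat.card {j : ℕ | 1 ≤ j ∧ j ≤ L ∧ σ^[j * n₁] x ∈ Om} : ℝ) < η₃ * L}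
          ∪ ⋃ t ∈ Finset.Icc 1 L, (σ^[n₁])^[t] ⁻¹'
              {y : X | y ∈ Om ∧ (Nat.card {j : ℕ | 1 ≤ j ∧ j ≤ m ∧
                  (firstReturnMap σ n₁ Om)^[j] y
                    ∈ Omj (t + cumulativeReturnTime σ n₁ Om j y)} : ℝ) < η₄ * m}) := by
        rw [hbad, zero_add]
    _ ≤ μ {x : X | (Nat.card {j : ℕ | 1 ≤ j ∧ j ≤ L ∧ σ^[j * n₁] x ∈ Om} : ℝ) < η₃ * L}
        + μ (⋃ t ∈ Finset.Icc 1 L, (σ^[n₁])^[t] ⁻¹'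
              {y : X | y ∈ Om ∧ (Nat.card {j : ℕ | 1 ≤ j ∧ j ≤ m ∧
                  (firstReturnMap σ n₁ Om)^[j] y
                    ∈ Omj (t + cumulativeReturnTime σ n₁ Om j y)} : ℝ) < η₄ * m}) :=
        measure_union_le _ _
    _ < ENNReal.ofReal (Real.exp (-(L:ℝ) * η₃))
        + (L : ENNReal) * ENNReal.ofReal (Real.exp (-(m:ℝ) * η₄)) :=
        ENNReal.add_lt_add_of_lt_of_le (measure_ne_top μ _) (hB L hC₄L) hUle
    _ ≤ ENNReal.ofReal (Real.exp (-(L:ℝ) * κ)) := by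
        rw [← ENNReal.ofReal_natCast L, ← ENNReal.ofReal_mul (by positivity),
          ← ENNReal.ofReal_add (by positivity) (by positivity)]
        apply ENNReal.ofReal_le_ofReal
        have hNfinal := hN L hNL
        have e1 : Real.exp (-(L:ℝ) * η₃)
            = Real.exp (-(L:ℝ) * (η₃ - κ)) * Real.exp (-(L:ℝ) * κ) := by
          rw [← Real.exp_add]
          congr 1
          ring
        have hm' : Real.exp (-(m:ℝ) * η₄)
            ≤ Real.exp η₄ * (Real.exp (-(L:ℝ) * (η₃ * η₄ - κ)) * Real.exp (-(L:ℝ) * κ)) := by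
          rw [← Real.exp_add, ← Real.exp_add]
          apply Real.exp_le_exp.mpr
          nlinarith [mul_le_mul_of_nonneg_right hm2 hη₄0.le]
        calc Real.exp (-(L:ℝ) * η₃) + (L:ℝ) * Real.exp (-(m:ℝ) * η₄)
            ≤ Real.exp (-(L:ℝ) * (η₃ - κ)) * Real.exp (-(L:ℝ) * κ)
              + (L:ℝ) * (Real.exp η₄
                * (Real.exp (-(L:ℝ) * (η₃ * η₄ - κ)) * Real.exp (-(L:ℝ) * κ))) := by
              rw [e1]
              gcongr
          _ = (Real.exp (-(L:ℝ) * (η₃ - κ))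
              + Real.exp η₄ * ((L:ℝ) * Real.exp (-(L:ℝ) * (η₃ * η₄ - κ))))
              * Real.exp (-(L:ℝ) * κ) := by ring
          _ ≤ 1 * Real.exp (-(L:ℝ) * κ) :=
              mul_le_mul_of_nonneg_right hNfinal.le (Real.exp_nonneg _)
          _ = Real.exp (-(L:ℝ) * κ) := one_mul _
end
end
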